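/- The optimal LOCC discrimination of the two-state m-qudit ensemble E = {(η_1, ρ_1), (η_2, ρ_2)} with η_1 = 2d^m/(d+3d^m), ρ_1 = (1/(2d^m))(1 + d^m Φ_d^m), η_2 = (d+d^m)/(d+3d^m), ρ_2 = Φ_d^m equals η_1 = 2d^m/(d+3d^m), because η_1ρ_1 − η_2ρ_2 = (1/(d+3d^m))(1 − dΦ_d^m) is block positive. -/

import Mathlib

open Matrix BigOperators ComplexOrder

noncomputable section

/-- Tensor product of a family of local operators, one per party/step. -/
def tensorFam {m : ℕ} {ι : Fin m → Type*} [∀ k, Fintype (ι k)]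
    (A : (k : Fin m) → Matrix (ι k) (ι k) ℂ) :
    Matrix ((k : Fin m) → ι k) ((k : Fin m) → ι k) ℂ :=
  Matrix.of fun i j => ∏ k, A k (i k) (j k)

/-- Separable operator: a sum of tensor products of positive semidefinite local operators. -/
def IsSep {m : ℕ} {ι : Fin m → Type*} [∀ k, Fintype (ι k)]
    (E : Matrix ((k : Fin m) → ι k) ((k : Fin m) → ι k) ℂ) : Prop :=
  ∃ (S : Finset ℕ) (A : ℕ → (k : Fin m) → Matrix (ι k) (ι k) ℂ),
    (∀ s ∈ S, ∀ k, (A s k).PosSemidef) ∧ E = ∑ s ∈ S, tensorFam (A s)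

/-- Separable state: separable with trace one. -/
def IsSepState {m : ℕ} {ι : Fin m → Type*} [∀ k, Fintype (ι k)]
    (σ : Matrix ((k : Fin m) → ι k) ((k : Fin m) → ι k) ℂ) : Prop :=
  IsSep σ ∧ σ.trace = 1

/-- Block positive: nonnegative mean value on every separable state. -/
def IsBlockPos {m : ℕ} {ι : Fin m → Type*} [∀ k, Fintype (ι k)]
    (E : Matrix ((k : Fin m) → ι k) ((k : Fin m) → ι k) ℂ) : Prop :=
  ∀ σ, IsSepState σ → 0 ≤ ((E * σ).trace).re

def IsPOVM {α N : Type*} [Fintype α] [Fintype N] [DecidableEq N]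
    (M : α → Matrix N N ℂ) : Prop :=
  (∀ i, (M i).PosSemidef) ∧ ∑ i, M i = 1

/-- Average success probability of a guessing strategy. -/
def succProb {α N : Type*} [Fintype α] [Fintype N]
    (η : α → ℝ) (ρ M : α → Matrix N N ℂ) : ℝ :=
  ∑ i, η i * ((ρ i * M i).trace).re
/-- The m-qudit GHZ state Φ_d^m = (1/d) Σ_{a,b} |a⋯a⟩⟨b⋯b|. -/
def ghz (m d : ℕ) : Matrix ((_ : Fin m) → Fin d) ((_ : Fin m) → Fin d) ℂ :=
  Matrix.of fun i j =>
    if (∀ k k', i k = i k') ∧ (∀ k k', j k = j k') then (d : ℂ)⁻¹ else 0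

lemma psd_diag_re_nonneg {n : Type*} [Fintype n] [DecidableEq n]
    {A : Matrix n n ℂ} (hA : A.PosSemidef) (a : n) : 0 ≤ (A a a).re := by
  have := hA.re_dotProduct_nonneg (Pi.single a 1)
  simpa [dotProduct, Matrix.mulVec, Pi.single_apply, Finset.mul_sum] using this

lemma psd_entry_bound {n : Type*} [Fintype n] [DecidableEq n]
    {A : Matrix n n ℂ} (hA : A.PosSemidef) (a b : n) :
    ‖A b a‖ ≤ Real.sqrt ((A b b).re) * Real.sqrt ((A a a).re) := by
  obtain ⟨B, rfl⟩ : ∃ B : Matrix n n ℂ, A = Bᴴ * B := by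
    open scoped MatrixOrder in exact CStarAlgebra.nonneg_iff_eq_star_mul_self.mp hA.nonneg
  have hd : ∀ x : n, ((Bᴴ * B) x x).re = ∑ c, ‖B c x‖ ^ 2 := by
    intro x
    simp only [Matrix.mul_apply, Matrix.conjTranspose_apply, Complex.re_sum]
    refine Finset.sum_congr rfl fun c _ => ?_
    rw [Complex.star_def, ← Complex.normSq_eq_conj_mul_self, Complex.ofReal_re,
      Complex.sq_norm]
  calc ‖(Bᴴ * B) b a‖
      ≤ ∑ c, ‖B c b‖ * ‖B c a‖ := by
        rw [Matrix.mul_apply]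
        refine (norm_sum_le _ _).trans_eq ?_
        refine Finset.sum_congr rfl fun c _ => ?_
        simp [norm_mul, Matrix.conjTranspose_apply]
    _ ≤ Real.sqrt (∑ c, ‖B c b‖ ^ 2) * Real.sqrt (∑ c, ‖B c a‖ ^ 2) :=
        Real.sum_mul_le_sqrt_mul_sqrt _ _ _
    _ = _ := by rw [hd, hd]

lemma sum_prod_le_prod_sum {ι κ : Type*} [Fintype κ] {s : Finset ι} (hs : s.Nonempty)
    (u : ι → κ → ℝ) (hu : ∀ k a, 0 ≤ u k a) :
    ∑ a : κ, ∏ k ∈ s, u k a ≤ ∏ k ∈ s, ∑ a : κ, u k a := by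
  induction hs using Finset.Nonempty.cons_induction with
  | singleton k => simp
  | cons k s hk hs ih =>
      simp_rw [Finset.prod_cons]
      calc ∑ a, u k a * ∏ j ∈ s, u j a
          ≤ ∑ a, u k a * ∑ b, ∏ j ∈ s, u j b := by
            refine Finset.sum_le_sum fun a _ => mul_le_mul_of_nonneg_left ?_ (hu k a)
            exact Finset.single_le_sum (fun b _ => Finset.prod_nonneg fun j _ => hu j b)
              (Finset.mem_univ a)
        _ = (∑ a, u k a) * (∑ b, ∏ j ∈ s, u j b) := by rw [← Finset.sum_mul]
        _ ≤ (∑ a, u k a) * ∏ j ∈ s, ∑ b, u j b :=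
            mul_le_mul_of_nonneg_left ih (Finset.sum_nonneg fun a _ => hu k a)

lemma sum_const_tuple {m d : ℕ} (hm : 0 < m) (f : ((_ : Fin m) → Fin d) → ℂ) :
    (∑ i : (_ : Fin m) → Fin d, if ∀ k k', i k = i k' then f i else 0)
      = ∑ a : Fin d, f (fun _ => a) := by
  classical
  rw [Finset.sum_ite, Finset.sum_const_zero, add_zero]
  have hset : Finset.univ.filter (fun i : (_ : Fin m) → Fin d => ∀ k k', i k = i k')
      = Finset.univ.image (fun a : Fin d => (fun _ => a : (_ : Fin m) → Fin d)) := by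
    ext i
    simp only [Finset.mem_filter, Finset.mem_univ, true_and, Finset.mem_image]
    constructor
    · intro h
      exact ⟨i ⟨0, hm⟩, funext fun k => h ⟨0, hm⟩ k⟩
    · rintro ⟨a, rfl⟩
      intro k k'; rfl
  rw [hset, Finset.sum_image]
  intro a _ b _ h
  exact congrFun h ⟨0, hm⟩

lemma sum_sum_const_tuple {m d : ℕ} (hm : 0 < m)
    (f : ((_ : Fin m) → Fin d) → ((_ : Fin m) → Fin d) → ℂ) :
    (∑ i : (_ : Fin m) → Fin d, ∑ j : (_ : Fin m) → Fin d,
        if (∀ k k', i k = i k') ∧ (∀ k k', j k = j k') then f i j else 0)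
      = ∑ a : Fin d, ∑ b : Fin d, f (fun _ => a) (fun _ => b) := by
  have h1 : ∀ i : (_ : Fin m) → Fin d,
      (∑ j : (_ : Fin m) → Fin d,
        if (∀ k k', i k = i k') ∧ (∀ k k', j k = j k') then f i j else 0)
      = if ∀ k k', i k = i k' then
          (∑ j : (_ : Fin m) → Fin d, if ∀ k k', j k = j k' then f i j else 0) else 0 := by
    intro i
    by_cases h : ∀ k k' : Fin m, i k = i k'
    · rw [if_pos h]
      exact Finset.sum_congr rfl fun j _ => by simp only [and_iff_right h]
    · rw [if_neg h]
      exact Finset.sum_eq_zero fun j _ => if_neg fun hc => h hc.1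
  simp_rw [h1]
  rw [sum_const_tuple hm]
  exact Finset.sum_congr rfl fun a _ => sum_const_tuple hm _

lemma key_blockpos {m d : ℕ} (hm : 2 ≤ m) (hd : 1 ≤ d)
    (A : (k : Fin m) → Matrix (Fin d) (Fin d) ℂ) (hA : ∀ k, (A k).PosSemidef) :
    0 ≤ (((1 - (d : ℂ) • ghz m d) * tensorFam A).trace).re := by
  classical
  have hm0 : 0 < m := by omega
  set s : Fin m → Fin d → ℝ := fun k a => (A k a a).re with hs
  have hsnn : ∀ k a, 0 ≤ s k a := fun k a => psd_diag_re_nonneg (hA k) a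
  -- trace of tensorFam
  have hT : ((tensorFam A).trace).re = ∏ k, ∑ a, s k a := by
    rw [Finset.prod_univ_sum (fun _ => (Finset.univ : Finset (Fin d))) s,
      Fintype.piFinset_univ]
    unfold tensorFam
    simp only [Matrix.trace, Matrix.diag, Matrix.of_apply, Complex.re_sum]
    refine Finset.sum_congr rfl fun i _ => ?_
    have : ∀ k, A k (i k) (i k) = ((s k (i k) : ℝ) : ℂ) :=
      fun k => ((hA k).isHermitian.coe_re_apply_self (i k)).symm
    rw [Finset.prod_congr rfl fun k _ => this k, ← Complex.ofReal_prod, Complex.ofReal_re]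
  -- trace of ghz * tensorFam
  have hG : ((ghz m d * tensorFam A).trace)
      = (d : ℂ)⁻¹ * ∑ a : Fin d, ∑ b : Fin d, ∏ k, A k b a := by
    unfold ghz tensorFam
    simp only [Matrix.trace, Matrix.diag, Matrix.mul_apply, Matrix.of_apply, ite_mul, zero_mul]
    rw [sum_sum_const_tuple hm0]
    rw [Finset.mul_sum]
    refine Finset.sum_congr rfl fun a _ => ?_
    rw [Finset.mul_sum]
  have hd0 : (d : ℂ) ≠ 0 := Nat.cast_ne_zero.mpr (by omega)
  rw [sub_mul, one_mul, smul_mul_assoc, Matrix.trace_sub, Matrix.trace_smul, Complex.sub_re,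
    smul_eq_mul, hG, ← mul_assoc, mul_inv_cancel₀ hd0, one_mul, sub_nonneg, Complex.re_sum]
  simp_rw [Complex.re_sum]
  rw [hT]
  set t : Fin d → ℝ := fun a => ∏ k, Real.sqrt (s k a) with ht
  have htnn : ∀ a, 0 ≤ t a := fun a => Finset.prod_nonneg fun k _ => Real.sqrt_nonneg _
  have step1 : ∀ a b : Fin d, (∏ k, A k b a).re ≤ t b * t a := by
    intro a b
    calc (∏ k, A k b a).re ≤ ‖∏ k, A k b a‖ := Complex.re_le_norm _
      _ = ∏ k, ‖A k b a‖ := norm_prod _ _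
      _ ≤ ∏ k, (Real.sqrt (s k b) * Real.sqrt (s k a)) :=
          Finset.prod_le_prod (fun k _ => norm_nonneg _)
            (fun k _ => psd_entry_bound (hA k) a b)
      _ = t b * t a := by rw [ht, Finset.prod_mul_distrib]
  have k0 : Fin m := ⟨0, by omega⟩
  calc ∑ a, ∑ b, (∏ k, A k b a).re
      ≤ ∑ a, ∑ b, t b * t a :=
        Finset.sum_le_sum fun a _ => Finset.sum_le_sum fun b _ => step1 a b
    _ = (∑ a, t a) * (∑ a, t a) := by
        simp_rw [← Finset.sum_mul]
        rw [← Finset.mul_sum]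
    _ ≤ ∏ k, ∑ a, s k a := by
        have h0 : (⟨0, by omega⟩ : Fin m) ∈ (Finset.univ : Finset (Fin m)) := Finset.mem_univ _
        set K : Fin m := ⟨0, by omega⟩
        have hne : (Finset.univ.erase K).Nonempty :=
          ⟨⟨1, by omega⟩, Finset.mem_erase.mpr ⟨by simp [K, Fin.ext_iff], Finset.mem_univ _⟩⟩
        have hsplit : ∀ a, t a = Real.sqrt (s K a) * ∏ k ∈ Finset.univ.erase K, Real.sqrt (s k a) :=
          fun a => (Finset.mul_prod_erase _ _ (Finset.mem_univ K)).symm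
        have hCS := Finset.sum_mul_sq_le_sq_mul_sq Finset.univ
          (fun a : Fin d => Real.sqrt (s K a))
          (fun a : Fin d => ∏ k ∈ Finset.univ.erase K, Real.sqrt (s k a))
        have e1 : ∑ a : Fin d, Real.sqrt (s K a) ^ 2 = ∑ a, s K a :=
          Finset.sum_congr rfl fun a _ => Real.sq_sqrt (hsnn K a)
        have e2 : ∑ a : Fin d, (∏ k ∈ Finset.univ.erase K, Real.sqrt (s k a)) ^ 2
            = ∑ a : Fin d, ∏ k ∈ Finset.univ.erase K, s k a := by
          refine Finset.sum_congr rfl fun a _ => ?_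
          rw [← Finset.prod_pow]
          exact Finset.prod_congr rfl fun k _ => Real.sq_sqrt (hsnn k a)
        have e3 : ∑ a : Fin d, ∏ k ∈ Finset.univ.erase K, s k a
            ≤ ∏ k ∈ Finset.univ.erase K, ∑ a, s k a :=
          sum_prod_le_prod_sum hne s hsnn
        have hfin : (∑ a, s K a) * ∏ k ∈ Finset.univ.erase K, ∑ a, s k a
            = ∏ k, ∑ a, s k a := Finset.mul_prod_erase Finset.univ (fun k => ∑ a, s k a) (Finset.mem_univ K)
        calc (∑ a, t a) * (∑ a, t a) = (∑ a, t a) ^ 2 := (sq _).symm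
          _ = (∑ a : Fin d, Real.sqrt (s K a) * ∏ k ∈ Finset.univ.erase K, Real.sqrt (s k a)) ^ 2 := by
              rw [← Finset.sum_congr rfl fun a _ => (hsplit a)]
          _ ≤ (∑ a : Fin d, Real.sqrt (s K a) ^ 2) *
              ∑ a : Fin d, (∏ k ∈ Finset.univ.erase K, Real.sqrt (s k a)) ^ 2 := hCS
          _ = (∑ a, s K a) * ∑ a : Fin d, ∏ k ∈ Finset.univ.erase K, s k a := by rw [e1, e2]
          _ ≤ (∑ a, s K a) * ∏ k ∈ Finset.univ.erase K, ∑ a, s k a :=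
              mul_le_mul_of_nonneg_left e3 (Finset.sum_nonneg fun a _ => hsnn K a)
          _ = ∏ k, ∑ a, s k a := hfin

/-- for the two-state m-qudit ensemble of Example 1,
η_1ρ_1 − η_2ρ_2 = (1/(d+3d^m))(1 − dΦ_d^m), and the optimal LOCC discrimination
probability equals η_1 = 2d^m/(d+3d^m). -/
theorem example_two_state_locc (m d : ℕ) (hm : 2 ≤ m) (hd : 2 ≤ d)
    (η : Fin 2 → ℝ) (ρ : Fin 2 → Matrix ((_ : Fin m) → Fin d) ((_ : Fin m) → Fin d) ℂ)
    (hη0 : η 0 = 2 * (d : ℝ) ^ m / ((d : ℝ) + 3 * (d : ℝ) ^ m))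
    (hη1 : η 1 = ((d : ℝ) + (d : ℝ) ^ m) / ((d : ℝ) + 3 * (d : ℝ) ^ m))
    (hρ0 : ρ 0 = (2 * (d : ℂ) ^ m)⁻¹ • (1 + ((d : ℂ) ^ m) • ghz m d))
    (hρ1 : ρ 1 = ghz m d)
    -- a class of LOCC measurements: separable POVMs containing the trivial guesses
    (C : Set (Fin 2 → Matrix ((_ : Fin m) → Fin d) ((_ : Fin m) → Fin d) ℂ))
    (hC : ∀ M ∈ C, IsPOVM M ∧ ∀ i, IsSep (M i))
    (htriv : ∀ x : Fin 2,
      (fun i => if i = x then (1 : Matrix ((_ : Fin m) → Fin d) ((_ : Fin m) → Fin d) ℂ) else 0) ∈ C)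
    (pL : ℝ) (hpL : IsLUB ((fun M => succProb η ρ M) '' C) pL) :
    ((η 0 : ℂ) • ρ 0 - (η 1 : ℂ) • ρ 1
        = ((d : ℂ) + 3 * (d : ℂ) ^ m)⁻¹ • (1 - (d : ℂ) • ghz m d)) ∧
    pL = 2 * (d : ℝ) ^ m / ((d : ℝ) + 3 * (d : ℝ) ^ m) := by
  have hd0C : (d : ℂ) ≠ 0 := Nat.cast_ne_zero.mpr (by omega)
  have hdm : (d : ℂ) ^ m ≠ 0 := pow_ne_zero _ hd0C
  have hXR : (0 : ℝ) < (d : ℝ) + 3 * (d : ℝ) ^ m := by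
    have : (0:ℝ) < (d:ℝ) := by exact_mod_cast (by omega : 0 < d)
    positivity
  have hXcast : ((d : ℂ) + 3 * (d : ℂ) ^ m) = (((d : ℝ) + 3 * (d : ℝ) ^ m : ℝ) : ℂ) := by
    push_cast; ring
  have hX : ((d : ℂ) + 3 * (d : ℂ) ^ m) ≠ 0 := by
    rw [hXcast]
    exact_mod_cast hXR.ne'
  have hid : (η 0 : ℂ) • ρ 0 - (η 1 : ℂ) • ρ 1
      = ((d : ℂ) + 3 * (d : ℂ) ^ m)⁻¹ • (1 - (d : ℂ) • ghz m d) := by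
    ext i j
    simp only [hρ0, hρ1, hη0, hη1, Matrix.sub_apply, Matrix.smul_apply, Matrix.add_apply,
      Matrix.one_apply, ghz, Matrix.of_apply, smul_eq_mul]
    push_cast
    split_ifs <;> field_simp <;> ring
  refine ⟨hid, ?_⟩
  -- trace facts
  have hcard : ((Fintype.card ((_ : Fin m) → Fin d) : ℕ) : ℂ) = (d : ℂ) ^ m := by
    simp [Fintype.card_pi, Fintype.card_fin]
  have htrghz : (ghz m d).trace = 1 := by
    unfold ghz
    simp only [Matrix.trace, Matrix.diag, Matrix.of_apply, and_self]
    rw [sum_const_tuple (by omega : 0 < m) (f := fun _ => (d : ℂ)⁻¹), Finset.sum_const,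
      Finset.card_univ, Fintype.card_fin, nsmul_eq_mul, mul_inv_cancel₀ hd0C]
  have htrρ0 : (ρ 0).trace = 1 := by
    rw [hρ0, Matrix.trace_smul, Matrix.trace_add, Matrix.trace_smul, Matrix.trace_one,
      htrghz, hcard]
    simp only [smul_eq_mul, mul_one]
    field_simp
    ring
  -- upper bound
  have hub : ∀ M ∈ C, succProb η ρ M ≤ η 0 := by
    intro M hM
    obtain ⟨⟨hpsd, hsum⟩, hsep⟩ := hC M hM
    have hM0 : M 0 = 1 - M 1 := by
      rw [Fin.sum_univ_two] at hsum
      exact eq_sub_of_add_eq hsum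
    have hblock : 0 ≤ (((1 - (d : ℂ) • ghz m d) * M 1).trace).re := by
      obtain ⟨S, A, hApsd, hMeq⟩ := hsep 1
      rw [hMeq, Finset.mul_sum, Matrix.trace_sum, Complex.re_sum]
      exact Finset.sum_nonneg fun sI hsI => key_blockpos hm (by omega) (A sI) (hApsd sI hsI)
    have e0 : ((ρ 0 * M 0).trace).re = 1 - ((ρ 0 * M 1).trace).re := by
      rw [hM0, Matrix.mul_sub, Matrix.mul_one, Matrix.trace_sub, Complex.sub_re, htrρ0,
        Complex.one_re]
    have eΔ : ((((η 0 : ℂ) • ρ 0 - (η 1 : ℂ) • ρ 1) * M 1).trace).re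
        = η 0 * ((ρ 0 * M 1).trace).re - η 1 * ((ρ 1 * M 1).trace).re := by
      rw [Matrix.sub_mul, Matrix.smul_mul, Matrix.smul_mul, Matrix.trace_sub,
        Matrix.trace_smul, Matrix.trace_smul, Complex.sub_re]
      simp only [smul_eq_mul, Complex.re_ofReal_mul]
    have hsucc : succProb η ρ M
        = η 0 - ((((η 0 : ℂ) • ρ 0 - (η 1 : ℂ) • ρ 1) * M 1).trace).re := by
      unfold succProb
      rw [Fin.sum_univ_two, e0, eΔ]
      ring
    rw [hsucc, hid]
    have hre : ((((d : ℂ) + 3 * (d : ℂ) ^ m)⁻¹ • (1 - (d : ℂ) • ghz m d) * M 1).trace).re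
        = ((d : ℝ) + 3 * (d : ℝ) ^ m)⁻¹ * (((1 - (d : ℂ) • ghz m d) * M 1).trace).re := by
      rw [Matrix.smul_mul, Matrix.trace_smul, smul_eq_mul,
        show ((d : ℂ) + 3 * (d : ℂ) ^ m)⁻¹ = ((((d : ℝ) + 3 * (d : ℝ) ^ m)⁻¹ : ℝ) : ℂ) by
          rw [hXcast, Complex.ofReal_inv]]
      exact Complex.re_ofReal_mul _ _
    rw [hre]
    have hnn : 0 ≤ ((d : ℝ) + 3 * (d : ℝ) ^ m)⁻¹ * (((1 - (d : ℂ) • ghz m d) * M 1).trace).re :=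
      mul_nonneg (inv_nonneg.mpr hXR.le) hblock
    linarith
  -- value at trivial guess 0
  have hlow : succProb η ρ
      (fun i => if i = 0 then (1 : Matrix ((_ : Fin m) → Fin d) ((_ : Fin m) → Fin d) ℂ) else 0)
      = η 0 := by
    unfold succProb
    rw [Fin.sum_univ_two]
    norm_num
    rw [htrρ0]
    simp
  have h1 : pL ≤ η 0 := hpL.2 (by rintro y ⟨M, hM, rfl⟩; exact hub M hM)
  have h2 : η 0 ≤ pL := hpL.1 ⟨_, htriv 0, hlow⟩
  rw [← hη0]
  exact le_antisymm h1 h2
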